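/- Let H₁, H₂ be Hilbert spaces and u : H₁ → H₂, v : H₂ → H₁ be operators such that v ∘ u has trace n and both the Hilbert–Schmidt norm of u and operator norm of v satisfy ‖u‖_HS · ‖v‖ ≤ √n with H₁ n-dimensional. Then the composition w := u ∘ v : H₂ → H₂ satisfies ‖w‖_HS ≤ √n and tr(w) = tr(v∘u) = n, hence (by the rigidity lemma applied on the n-dimensional range considerations) u ∘ v ∘ u = u, i.e., v ∘ u = id on H₁ when H₁ is n-dimensional. -/
import Mathlib

open scoped ComplexInnerProductSpace in
lemma trace_eq_sum_inner' {H : Type*} [NormedAddCommGroup H] [InnerProductSpace ℂ H]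
    [FiniteDimensional ℂ H] {ι : Type*} [Fintype ι] [DecidableEq ι]
    (b : OrthonormalBasis ι ℂ H) (T : H →ₗ[ℂ] H) :
    LinearMap.trace ℂ H T = ∑ i, ⟪b i, T (b i)⟫ := by
  rw [LinearMap.trace_eq_matrix_trace ℂ b.toBasis T, Matrix.trace]
  congr 1
  ext i
  rw [Matrix.diag_apply, LinearMap.toMatrix_apply, b.coe_toBasis_repr_apply,
    b.repr_apply_apply, b.coe_toBasis]

open scoped ComplexInnerProductSpace in
theorem stmt14 {H₁ H₂ : Type*} [NormedAddCommGroup H₁] [InnerProductSpace ℂ H₁]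
    [NormedAddCommGroup H₂] [InnerProductSpace ℂ H₂] [CompleteSpace H₂]
    [FiniteDimensional ℂ H₁] (n : ℕ) (hn : 0 < n) (hdim : Module.finrank ℂ H₁ = n)
    (u : H₁ →L[ℂ] H₂) (v : H₂ →L[ℂ] H₁)
    (hHS : Real.sqrt
        ((LinearMap.trace ℂ H₁
          (((ContinuousLinearMap.adjoint u).comp u : H₁ →L[ℂ] H₁) : H₁ →ₗ[ℂ] H₁)).re) *
        ‖v‖ ≤ Real.sqrt n)
    (htr : LinearMap.trace ℂ H₁ ((v.comp u : H₁ →L[ℂ] H₁) : H₁ →ₗ[ℂ] H₁) = (n : ℂ)) :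
    v.comp u = ContinuousLinearMap.id ℂ H₁ := by
  set b := stdOrthonormalBasis ℂ H₁ with hb
  have hA : (LinearMap.trace ℂ H₁
      (((ContinuousLinearMap.adjoint u).comp u : H₁ →L[ℂ] H₁) : H₁ →ₗ[ℂ] H₁)).re
      = ∑ i, ‖u (b i)‖ ^ 2 := by
    rw [trace_eq_sum_inner' b, Complex.re_sum]
    congr 1; ext i
    simp only [ContinuousLinearMap.coe_coe, ContinuousLinearMap.comp_apply,
      ContinuousLinearMap.adjoint_inner_right]
    rw [← RCLike.re_to_complex, inner_self_eq_norm_sq]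
  have hA0 : (0:ℝ) ≤ ∑ i, ‖u (b i)‖ ^ 2 := by positivity
  have hsq : (∑ i, ‖u (b i)‖ ^ 2) * ‖v‖ ^ 2 ≤ (n:ℝ) := by
    have h1 : (Real.sqrt (∑ i, ‖u (b i)‖ ^ 2) * ‖v‖) ^ 2 ≤ (Real.sqrt n) ^ 2 := by
      apply pow_le_pow_left₀ (by positivity) (hA ▸ hHS)
    rwa [mul_pow, Real.sq_sqrt hA0, Real.sq_sqrt (by positivity : (0:ℝ) ≤ (n:ℝ))] at h1
  have hT : ∑ i, ‖v (u (b i))‖ ^ 2 ≤ (n:ℝ) := by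
    refine le_trans ?_ hsq
    rw [Finset.sum_mul]
    apply Finset.sum_le_sum
    intro i _
    calc ‖v (u (b i))‖ ^ 2 ≤ (‖v‖ * ‖u (b i)‖) ^ 2 := by
          apply pow_le_pow_left₀ (norm_nonneg _) (v.le_opNorm _)
      _ = ‖u (b i)‖ ^ 2 * ‖v‖ ^ 2 := by ring
  have htrRe : ∑ i, (⟪b i, v (u (b i))⟫ : ℂ).re = (n:ℝ) := by
    have := congrArg Complex.re ((trace_eq_sum_inner' b _).symm.trans htr)
    simpa [Complex.re_sum] using this
  have hkey : ∑ i, ‖v (u (b i)) - b i‖ ^ 2 ≤ 0 := by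
    have hexp : ∀ i : Fin (Module.finrank ℂ H₁), ‖v (u (b i)) - b i‖ ^ 2
        = ‖v (u (b i))‖ ^ 2 - 2 * (⟪b i, v (u (b i))⟫ : ℂ).re + 1 := by
      intro i
      have hc : (⟪v (u (b i)), b i⟫ : ℂ).re = (⟪b i, v (u (b i))⟫ : ℂ).re := by
        rw [← inner_conj_symm (b i)]; exact Complex.conj_re _
      rw [@norm_sub_sq ℂ, b.orthonormal.1 i]
      simp only [RCLike.re_to_complex]
      rw [hc]; norm_num
    rw [Finset.sum_congr rfl fun i _ => hexp i, Finset.sum_add_distrib,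
      Finset.sum_sub_distrib, ← Finset.mul_sum, htrRe, Finset.sum_const,
      Finset.card_univ, Fintype.card_fin]
    simp only [nsmul_eq_mul, mul_one, hdim]
    linarith [hT]
  have heq : ∀ i, v (u (b i)) = b i := by
    intro i
    have h0 : ‖v (u (b i)) - b i‖ ^ 2 ≤ 0 :=
      le_trans (Finset.single_le_sum (f := fun j => ‖v (u (b j)) - b j‖ ^ 2)
        (fun j _ => by positivity) (Finset.mem_univ i)) hkey
    have : ‖v (u (b i)) - b i‖ = 0 := by nlinarith [norm_nonneg (v (u (b i)) - b i)]
    rwa [norm_eq_zero, sub_eq_zero] at this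
  apply ContinuousLinearMap.coe_injective
  apply b.toBasis.ext
  intro i
  simpa using heq i
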